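/- If k₁ and k₂ are distinct squarefree positive integers, then k₁·τ(k₁) ≠ k₂·τ(k₂), where τ is the number-of-divisors function. -/

import Mathlib

lemma sqfree_card_divisors {n : ℕ} (h : Squarefree n) :
    (Nat.divisors n).card = 2 ^ n.primeFactors.card := by
  have hn : n ≠ 0 := h.ne_zero
  rw [Nat.card_divisors hn]
  rw [Finset.prod_congr rfl fun p hp => ?_, Finset.prod_const]
  have h1 : n.factorization p = 1 := by
    have hle := (Nat.squarefree_iff_factorization_le_one hn).mp h p
    have hge : 1 ≤ n.factorization p :=
      (Nat.Prime.factorization_pos_of_dvd (Nat.prime_of_mem_primeFactors hp) hn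
        (Nat.dvd_of_mem_primeFactors hp))
    omega
  rw [h1]

lemma key (k₁ k₂ : ℕ) (h₁ : Squarefree k₁) (h₂ : Squarefree k₂)
    (hne : k₁ ≠ k₂) (hle : k₁.primeFactors.card ≤ k₂.primeFactors.card) :
    k₁ * (Nat.divisors k₁).card ≠ k₂ * (Nat.divisors k₂).card := by
  intro h
  rw [sqfree_card_divisors h₁, sqfree_card_divisors h₂] at h
  set a := k₁.primeFactors.card
  set b := k₂.primeFactors.card
  have hb : b = (b - a) + a := by omega
  rw [hb, pow_add, ← mul_assoc] at h
  have hpos : (0:ℕ) < 2 ^ a := Nat.pow_pos (by norm_num)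
  have hk : k₁ = k₂ * 2 ^ (b - a) := Nat.eq_of_mul_eq_mul_right hpos h
  obtain hd | hd | hd : b - a = 0 ∨ b - a = 1 ∨ 2 ≤ b - a := by omega
  · rw [hd] at hk; simp at hk; exact hne hk
  · rw [hd, pow_one] at hk
    have h2 : ¬ (2 ∣ k₂) := by
      intro hdvd
      have : 2 * 2 ∣ k₁ := by
        rw [hk]; exact Nat.mul_dvd_mul hdvd dvd_rfl
      exact Nat.Prime.one_lt Nat.prime_two |>.ne' (Nat.isUnit_iff.mp (h₁ 2 this))
    have hk2 : k₂ ≠ 0 := h₂.ne_zero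
    have hpf : k₁.primeFactors = insert 2 k₂.primeFactors := by
      rw [hk, mul_comm, Nat.primeFactors_mul (by norm_num) hk2]
      simp [Nat.Prime.primeFactors Nat.prime_two, Finset.union_comm]
    have : a = b + 1 := by
      rw [show a = k₁.primeFactors.card from rfl, hpf,
        Finset.card_insert_of_notMem (fun hm => h2 (Nat.dvd_of_mem_primeFactors hm))]
    omega
  · have h4 : 2 * 2 ∣ k₁ := by
      rw [hk]
      have : (2*2) ∣ 2 ^ (b - a) := by
        have := pow_dvd_pow 2 (show 2 ≤ b - a from hd)
        simpa [pow_two] using this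
      exact this.trans ⟨k₂, mul_comm _ _⟩
    exact Nat.Prime.one_lt Nat.prime_two |>.ne' (Nat.isUnit_iff.mp (h₁ 2 h4))

theorem squarefree_mul_tau_ne (k₁ k₂ : ℕ) (h₁ : Squarefree k₁) (h₂ : Squarefree k₂)
    (hne : k₁ ≠ k₂) :
    k₁ * (Nat.divisors k₁).card ≠ k₂ * (Nat.divisors k₂).card := by
  rcases le_or_gt k₁.primeFactors.card k₂.primeFactors.card with hle | hlt
  · exact key k₁ k₂ h₁ h₂ hne hle
  · exact (key k₂ k₁ h₂ h₁ hne.symm hlt.le).symm
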